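/- Let 𝕋 = {z ∈ ℂ : |z| = 1} and let (Γ,Ψ) be a 𝕋-gain graph on n vertices, with complex adjacency matrix A ∈ M_n(ℂ) whose (i,j) entry is Ψ(v_i,v_j) ∈ 𝕋 if v_i ∼ v_j and 0 otherwise, and let A⁺ be the {0,1} adjacency matrix of the underlying graph Γ. Then (Γ,Ψ) is balanced if and only if A and A⁺ are cospectral (have the same spectrum with multiplicities). -/

import Mathlib

open scoped Kronecker
open Matrix Polynomial Filter

namespace GainPaper

variable {G : Type*} [Group G]

/-- The gain of a walk: product of the gains of its darts. -/
def walkGain {n : ℕ} {Γ : SimpleGraph (Fin n)} {M : Type*} [Monoid M]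
    (Ψ : Fin n → Fin n → M) {u v : Fin n} (p : Γ.Walk u v) : M :=
  (p.darts.map fun d => Ψ d.toProd.1 d.toProd.2).prod

/-- `Ψ` is a gain function on `Γ`: the gain of an edge in the reverse
orientation is the inverse of its gain. -/
def IsGain {n : ℕ} (Γ : SimpleGraph (Fin n)) (Ψ : Fin n → Fin n → G) : Prop :=
  ∀ i j, Γ.Adj i j → Ψ j i = (Ψ i j)⁻¹

/-- A gain graph is balanced if every closed walk has gain `1`. -/
def IsBalanced {n : ℕ} (Γ : SimpleGraph (Fin n)) {M : Type*} [Monoid M]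
    (Ψ : Fin n → Fin n → M) : Prop :=
  ∀ (v : Fin n) (p : Γ.Walk v v), walkGain Ψ p = 1

/-- The adjacency matrix of a gain graph, with entries in the group algebra ℂG. -/
noncomputable def gainAdj {n : ℕ} (Γ : SimpleGraph (Fin n)) [DecidableRel Γ.Adj]
    (Ψ : Fin n → Fin n → G) : Matrix (Fin n) (Fin n) (MonoidAlgebra ℂ G) :=
  Matrix.of fun i j => if Γ.Adj i j then MonoidAlgebra.single (Ψ i j) 1 else 0

/-- The involution on ℂG: `(Σ f_x x)* = Σ conj(f_x) x⁻¹`. -/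
noncomputable def starCG (f : MonoidAlgebra ℂ G) : MonoidAlgebra ℂ G :=
  f.coeff.sum fun x c => MonoidAlgebra.single x⁻¹ (starRingEnd ℂ c)

/-- The involution on M_n(ℂG): `(F*)_{i,j} = (F_{j,i})*`. -/
noncomputable def starM {n : ℕ} (F : Matrix (Fin n) (Fin n) (MonoidAlgebra ℂ G)) :
    Matrix (Fin n) (Fin n) (MonoidAlgebra ℂ G) :=
  Matrix.of fun i j => starCG (F j i)

/-- The trace on M_n(ℂG): sum over the diagonal of the coefficients of `1_G`. -/
noncomputable def trCG {n : ℕ} (F : Matrix (Fin n) (Fin n) (MonoidAlgebra ℂ G)) : ℂ :=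
  ∑ i, (F i i).coeff 1

/-- The Fourier transform of `f ∈ ℂG` at `π`: `Σ_x f(x) π(x)`. -/
noncomputable def fourier {m : Type*} (f : MonoidAlgebra ℂ G) (π : G → Matrix m m ℂ) :
    Matrix m m ℂ :=
  f.coeff.sum fun x c => c • π x

/-- The (finite) set of group elements appearing in some entry of `F`. -/
noncomputable def matSupport {n : ℕ} (F : Matrix (Fin n) (Fin n) (MonoidAlgebra ℂ G)) :
    Finset G :=
  letI := Classical.decEq G
  Finset.univ.biUnion fun i : Fin n => Finset.univ.biUnion fun j : Fin n => (F i j).coeff.support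

/-- `F(x)`: the complex matrix of coefficients of `x` in the entries of `F`. -/
def matCoeff {n : ℕ} (F : Matrix (Fin n) (Fin n) (MonoidAlgebra ℂ G)) (x : G) :
    Matrix (Fin n) (Fin n) ℂ :=
  Matrix.of fun i j => (F i j).coeff x

/-- Fourier transform of `F ∈ M_n(ℂG)` at `π`: `F̂(π) = Σ_{x∈G} F(x) ⊗ π(x)`. -/
noncomputable def fourierM {n : ℕ} {m : Type*} (F : Matrix (Fin n) (Fin n) (MonoidAlgebra ℂ G))
    (π : G → Matrix m m ℂ) : Matrix (Fin n × m) (Fin n × m) ℂ :=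
  ∑ x ∈ matSupport F, matCoeff F x ⊗ₖ π x

/-- A representation is unitary if each `π g` is a unitary matrix. -/
def IsUnitaryRep {m : Type*} [Fintype m] [DecidableEq m] (π : G →* Matrix m m ℂ) : Prop :=
  ∀ g, π g ∈ Matrix.unitaryGroup m ℂ

/-- Irreducibility: the space is nonzero and has no nontrivial invariant subspace. -/
def IsIrred {m : Type*} [Fintype m] [DecidableEq m] (π : G →* Matrix m m ℂ) : Prop :=
  Nonempty m ∧
    ∀ W : Submodule ℂ (m → ℂ), (∀ g, ∀ v ∈ W, (π g).mulVec v ∈ W) → W = ⊥ ∨ W = ⊤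

/-- Equivalence of two matrix representations: an invertible intertwiner. -/
def RepEquiv {m m' : Type*} [Fintype m] [DecidableEq m] [Fintype m'] [DecidableEq m']
    (π : G →* Matrix m m ℂ) (π' : G →* Matrix m' m' ℂ) : Prop :=
  ∃ e : (m → ℂ) ≃ₗ[ℂ] (m' → ℂ), ∀ g v, e ((π g).mulVec v) = (π' g).mulVec (e v)

/-- λ₁: the largest real root of the characteristic polynomial
(= the largest eigenvalue, for a Hermitian matrix). -/
noncomputable def lam1 {m : Type*} [Fintype m] [DecidableEq m] (M : Matrix m m ℂ) : ℝ :=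
  sSup {x : ℝ | M.charpoly.IsRoot (x : ℂ)}

/-- Spectral radius: the sup of the absolute values of the eigenvalues. -/
noncomputable def specRad {m : Type*} [Fintype m] [DecidableEq m] (M : Matrix m m ℂ) : ℝ :=
  sSup {r : ℝ | ∃ μ : ℂ, M.charpoly.IsRoot μ ∧ r = ‖μ‖}

/-- Adjacency relation of the cover graph on `V × G`:
`(u,g) ∼ (v,h)` iff `u ∼ v` and `h = Ψ(u,v)⁻¹ g`. -/
def coverAdj {n : ℕ} (Γ : SimpleGraph (Fin n)) (Ψ : Fin n → Fin n → G) (p q : Fin n × G) :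
    Prop :=
  Γ.Adj p.1 q.1 ∧ q.2 = (Ψ p.1 q.1)⁻¹ * p.2

/-- The {0,1} adjacency matrix of the cover graph. -/
noncomputable def coverMatrix {n : ℕ} [DecidableEq G] (Γ : SimpleGraph (Fin n))
    [DecidableRel Γ.Adj] (Ψ : Fin n → Fin n → G) : Matrix (Fin n × G) (Fin n × G) ℂ :=
  Matrix.of fun p q => if Γ.Adj p.1 q.1 ∧ q.2 = (Ψ p.1 q.1)⁻¹ * p.2 then 1 else 0

/-- The left regular representation, as matrices:
`λ_G(g)_{r,p} = 1` if `g = r p⁻¹`, else `0`. -/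
noncomputable def lamG [DecidableEq G] : G → Matrix G G ℂ :=
  fun g => Matrix.of fun r p => if g = r * p⁻¹ then 1 else 0



section Statement13Aux

variable {n : ℕ} {Γ : SimpleGraph (Fin n)} {Ψ : Fin n → Fin n → ℂ}

lemma walkGain_nil' {u : Fin n} : walkGain Ψ (SimpleGraph.Walk.nil : Γ.Walk u u) = 1 := rfl

lemma walkGain_cons {u v w : Fin n} (h : Γ.Adj u v) (p : Γ.Walk v w) :
    walkGain Ψ (SimpleGraph.Walk.cons h p) = Ψ u v * walkGain Ψ p := by
  simp [walkGain]

lemma walkGain_append {u v w : Fin n} (p : Γ.Walk u v) (q : Γ.Walk v w) :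
    walkGain Ψ (p.append q) = walkGain Ψ p * walkGain Ψ q := by
  simp [walkGain, SimpleGraph.Walk.darts_append]

lemma walkGain_concat {u v w : Fin n} (p : Γ.Walk u v) (h : Γ.Adj v w) :
    walkGain Ψ (p.concat h) = walkGain Ψ p * Ψ v w := by
  simp [walkGain, SimpleGraph.Walk.darts_concat]

lemma walkGain_copy {u v u' v' : Fin n} (p : Γ.Walk u v) (hu : u = u') (hv : v = v') :
    walkGain Ψ (p.copy hu hv) = walkGain Ψ p := by
  subst hu; subst hv; rfl

lemma abs_walkGain (hunit : ∀ i j, Γ.Adj i j → ‖Ψ i j‖ = 1)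
    {u v : Fin n} (p : Γ.Walk u v) : ‖walkGain Ψ p‖ = 1 := by
  induction p with
  | nil => simp [walkGain_nil']
  | cons h p ih => rw [walkGain_cons, norm_mul, ih, hunit _ _ h, mul_one]

lemma walkGain_mul_reverse (hunit : ∀ i j, Γ.Adj i j → ‖Ψ i j‖ = 1)
    (hinv : ∀ i j, Γ.Adj i j → Ψ j i = (Ψ i j)⁻¹)
    {u v : Fin n} (p : Γ.Walk u v) :
    walkGain Ψ p * walkGain Ψ p.reverse = 1 := by
  induction p with
  | nil => simp [walkGain_nil']
  | cons h p ih =>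
    rename_i a b c
    rw [SimpleGraph.Walk.reverse_cons, walkGain_cons, walkGain_append]
    have h1 : walkGain Ψ (SimpleGraph.Walk.cons h.symm SimpleGraph.Walk.nil : Γ.Walk b a)
        = Ψ b a := by rw [walkGain_cons, walkGain_nil', mul_one]
    rw [h1, hinv _ _ h]
    have hne : Ψ a b ≠ 0 := by
      intro h0; have := hunit _ _ h; rw [h0] at this; simp at this
    field_simp
    exact ih

lemma gain_indep (hB : IsBalanced Γ Ψ)
    (hunit : ∀ i j, Γ.Adj i j → ‖Ψ i j‖ = 1)
    (hinv : ∀ i j, Γ.Adj i j → Ψ j i = (Ψ i j)⁻¹)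
    {u v : Fin n} (p q : Γ.Walk u v) : walkGain Ψ p = walkGain Ψ q := by
  have h1 := hB u (p.append q.reverse)
  rw [walkGain_append] at h1
  have h2 := walkGain_mul_reverse hunit hinv q
  have hne : walkGain Ψ q.reverse ≠ 0 := by
    intro h0; rw [h0, mul_zero] at h2; exact one_ne_zero h2.symm
  exact mul_right_cancel₀ hne (h1.trans h2.symm)

lemma pow_apply_eq_sum_walkGain [DecidableRel Γ.Adj] (k : ℕ) (u v : Fin n) :
    ((Matrix.of fun i j => if Γ.Adj i j then Ψ i j else 0 : Matrix (Fin n) (Fin n) ℂ) ^ k) u v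
      = ∑ p ∈ Γ.finsetWalkLength k u v, walkGain Ψ p := by
  induction k generalizing u v with
  | zero =>
    obtain rfl | h := eq_or_ne u v
    · simp [SimpleGraph.finsetWalkLength, Matrix.one_apply, walkGain]
    · simp [SimpleGraph.finsetWalkLength, Matrix.one_apply, h]
  | succ k ih =>
    rw [pow_succ', SimpleGraph.finsetWalkLength, Finset.sum_biUnion ?hdis]
    case hdis =>
      rintro ⟨x, hx⟩ - ⟨y, hy⟩ - hxy
      rw [Function.onFun, Finset.disjoint_left]
      intro p hp hp'
      simp only [Finset.mem_map, Function.Embedding.coeFn_mk] at hp hp'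
      obtain ⟨px, _, rfl⟩ := hp
      obtain ⟨py, hpy, hp⟩ := hp'
      cases hp
      simp at hxy
    rw [Matrix.mul_apply]
    have hR : ∀ w : Γ.neighborSet u,
        (∑ q ∈ (Γ.finsetWalkLength k (w : Fin n) v).map
            ⟨fun p => SimpleGraph.Walk.cons w.property p, fun _ _ h => by cases h; rfl⟩, walkGain Ψ q)
        = Ψ u w * ∑ p ∈ Γ.finsetWalkLength k (w : Fin n) v, walkGain Ψ p := by
      intro w
      rw [Finset.sum_map, Finset.mul_sum]
      exact Finset.sum_congr rfl fun p _ => walkGain_cons w.property p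
    rw [Finset.sum_congr rfl fun w _ => hR w]
    have hcoe : (∑ w : Γ.neighborSet u,
          Ψ u w * ∑ p ∈ Γ.finsetWalkLength k (w : Fin n) v, walkGain Ψ p)
        = ∑ w ∈ Γ.neighborFinset u,
          Ψ u w * ∑ p ∈ Γ.finsetWalkLength k w v, walkGain Ψ p := by
      rw [SimpleGraph.neighborFinset_def]
      exact Finset.sum_set_coe (s := Γ.neighborSet u)
        (f := fun w => Ψ u w * ∑ p ∈ Γ.finsetWalkLength k w v, walkGain Ψ p)
    rw [hcoe, SimpleGraph.neighborFinset_eq_filter, Finset.sum_filter]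
    refine Finset.sum_congr rfl fun j _ => ?_
    by_cases h : Γ.Adj u j <;> simp [h, ih]

lemma charpoly_similar (P Q M : Matrix (Fin n) (Fin n) ℂ)
    (hPQ : P * Q = 1) (M' : Matrix (Fin n) (Fin n) ℂ) (hM' : M' = P * M * Q) :
    M'.charpoly = M.charpoly := by
  subst hM'
  have key : Matrix.charmatrix (P * M * Q)
      = P.map (C : ℂ → ℂ[X]) * Matrix.charmatrix M * Q.map (C : ℂ → ℂ[X]) := by
    have hmapPQ : P.map (C : ℂ → ℂ[X]) * Q.map (C : ℂ → ℂ[X]) = 1 := by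
      rw [← Matrix.map_mul, hPQ, Matrix.map_one _ (map_zero C) (map_one C)]
    unfold Matrix.charmatrix
    rw [mul_sub, sub_mul]
    congr 1
    · rw [Matrix.scalar_apply, ← Matrix.smul_one_eq_diagonal, Matrix.mul_smul, Matrix.mul_one,
        Matrix.smul_mul, hmapPQ]
    · simp only [RingHom.mapMatrix_apply]
      rw [← Matrix.map_mul, ← Matrix.map_mul]
  have hdet : (P.map (C : ℂ → ℂ[X])).det * (Q.map (C : ℂ → ℂ[X])).det = 1 := by
    rw [← Matrix.det_mul, ← Matrix.map_mul, hPQ, Matrix.map_one _ (map_zero C) (map_one C),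
      Matrix.det_one]
  unfold Matrix.charpoly
  rw [key, Matrix.det_mul, Matrix.det_mul]
  ring_nf
  rw [mul_comm ((P.map (C : ℂ → ℂ[X])).det), mul_assoc, hdet, mul_one]

lemma charpoly_hermitian {M : Matrix (Fin n) (Fin n) ℂ} (hM : M.IsHermitian) :
    M.charpoly = ∏ i, (X - C ((hM.eigenvalues i : ℝ) : ℂ)) := by
  have hU := (Matrix.IsHermitian.eigenvectorUnitary hM).2
  rw [Unitary.mem_iff] at hU
  have h1 : M.charpoly
      = (Matrix.diagonal ((↑) ∘ hM.eigenvalues) : Matrix (Fin n) (Fin n) ℂ).charpoly := by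
    refine charpoly_similar _ _ _ ?_ _ hM.spectral_theorem
    exact hU.2
  rw [h1, Matrix.charpoly_of_upperTriangular _ (Matrix.blockTriangular_diagonal _)]
  refine Finset.prod_congr rfl fun i _ => by simp

lemma trace_pow_hermitian {M : Matrix (Fin n) (Fin n) ℂ} (hM : M.IsHermitian) (k : ℕ) :
    (M ^ k).trace = ∑ i, ((hM.eigenvalues i : ℝ) : ℂ) ^ k := by
  have hU := (Matrix.IsHermitian.eigenvectorUnitary hM).2
  rw [Unitary.mem_iff] at hU
  set U : Matrix (Fin n) (Fin n) ℂ :=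
    (Matrix.IsHermitian.eigenvectorUnitary hM : Matrix (Fin n) (Fin n) ℂ)
  set D : Matrix (Fin n) (Fin n) ℂ := Matrix.diagonal ((↑) ∘ hM.eigenvalues)
  have hpow : M ^ k = U * D ^ k * star U := by
    induction k with
    | zero => simpa using hU.2.symm
    | succ k ih =>
      have cancel : ∀ X : Matrix (Fin n) (Fin n) ℂ, star U * (U * X) = X := fun X => by
        rw [← Matrix.mul_assoc, hU.1, Matrix.one_mul]
      rw [pow_succ, ih]
      conv_lhs => rw [hM.spectral_theorem]
      rw [pow_succ]
      simp only [Unitary.conjStarAlgAut_apply, Matrix.mul_assoc, cancel]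
      rw [cancel]
      rfl
  rw [hpow, Matrix.trace_mul_cycle, hU.1, Matrix.one_mul,
    Matrix.diagonal_pow, Matrix.trace_diagonal]
  simp

lemma trace_pow_eq_sum_roots {M : Matrix (Fin n) (Fin n) ℂ} (hM : M.IsHermitian) (k : ℕ) :
    (M ^ k).trace = (M.charpoly.roots.map (· ^ k)).sum := by
  have hroots : M.charpoly.roots
      = (Finset.univ.val.map fun i => ((hM.eigenvalues i : ℝ) : ℂ)) := by
    have hmm : (Multiset.map (fun i => X - C ((hM.eigenvalues i : ℝ) : ℂ)) Finset.univ.val)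
        = Multiset.map (fun a : ℂ => X - C a)
            (Multiset.map (fun i => ((hM.eigenvalues i : ℝ) : ℂ)) Finset.univ.val) := by
      rw [Multiset.map_map]; rfl
    rw [charpoly_hermitian hM, Finset.prod_eq_multiset_prod, hmm,
      Polynomial.roots_multiset_prod_X_sub_C]
  rw [hroots, trace_pow_hermitian hM k, Multiset.map_map]
  rw [Finset.sum_eq_multiset_sum]
  rfl

/-- A walk from the component representative to `v`. -/
noncomputable def walkTo (Γ : SimpleGraph (Fin n)) (v : Fin n) :
    Γ.Walk ((Γ.connectedComponentMk v).out) v :=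
  Classical.choice (show Nonempty (Γ.Walk ((Γ.connectedComponentMk v).out) v) from by
    rw [show (Nonempty (Γ.Walk ((Γ.connectedComponentMk v).out) v)) =
        (Γ.Reachable ((Γ.connectedComponentMk v).out) v) from rfl,
      ← SimpleGraph.ConnectedComponent.eq]
    exact (Γ.connectedComponentMk v).out_eq)

/-- The switching function. -/
noncomputable def theta (Γ : SimpleGraph (Fin n)) (Ψ : Fin n → Fin n → ℂ) (v : Fin n) : ℂ :=
  walkGain Ψ (walkTo Γ v)

end Statement13Aux

/-- a 𝕋-gain graph is balanced iff its complex adjacency matrix is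
cospectral with the adjacency matrix of the underlying graph. -/
theorem statement13 {n : ℕ} (Γ : SimpleGraph (Fin n)) [DecidableRel Γ.Adj]
    (Ψ : Fin n → Fin n → ℂ)
    (hunit : ∀ i j, Γ.Adj i j → ‖Ψ i j‖ = 1)
    (hinv : ∀ i j, Γ.Adj i j → Ψ j i = (Ψ i j)⁻¹) :
    IsBalanced Γ Ψ ↔
      (Matrix.of fun i j => if Γ.Adj i j then Ψ i j else 0 :
          Matrix (Fin n) (Fin n) ℂ).charpoly = (Γ.adjMatrix ℂ).charpoly := by
  classical
  set A : Matrix (Fin n) (Fin n) ℂ :=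
    (Matrix.of fun i j => if Γ.Adj i j then Ψ i j else 0) with hA
  constructor
  · intro hB
    have hθabs : ∀ v, ‖theta Γ Ψ v‖ = 1 := fun v => abs_walkGain hunit _
    have hθne : ∀ v, theta Γ Ψ v ≠ 0 := by
      intro v h0
      have := hθabs v; rw [h0] at this; simp at this
    have hkey : ∀ i j, Γ.Adj i j → theta Γ Ψ j = theta Γ Ψ i * Ψ i j := by
      intro i j hadj
      have hroot : (Γ.connectedComponentMk i).out = (Γ.connectedComponentMk j).out := by
        rw [SimpleGraph.ConnectedComponent.connectedComponentMk_eq_of_adj hadj]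
      have hq : walkGain Ψ (((walkTo Γ i).concat hadj).copy hroot rfl)
          = theta Γ Ψ i * Ψ i j := by
        rw [walkGain_copy, walkGain_concat]; rfl
      rw [show theta Γ Ψ j = walkGain Ψ (walkTo Γ j) from rfl,
        ← gain_indep hB hunit hinv (((walkTo Γ i).concat hadj).copy hroot rfl) (walkTo Γ j), hq]
    have hPsi : ∀ i j, Γ.Adj i j → Ψ i j = (theta Γ Ψ i)⁻¹ * theta Γ Ψ j := by
      intro i j hadj
      rw [hkey i j hadj, ← mul_assoc, inv_mul_cancel₀ (hθne i), one_mul]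
    refine charpoly_similar (Matrix.diagonal fun v => (theta Γ Ψ v)⁻¹)
      (Matrix.diagonal (theta Γ Ψ)) (Γ.adjMatrix ℂ) ?_ A ?_
    · rw [Matrix.diagonal_mul_diagonal,
        show (fun v => (theta Γ Ψ v)⁻¹ * theta Γ Ψ v) = fun _ => (1 : ℂ) from
          funext fun v => inv_mul_cancel₀ (hθne v), Matrix.diagonal_one]
    · ext i j
      rw [hA]
      simp only [Matrix.of_apply, Matrix.diagonal_mul, Matrix.mul_diagonal,
        SimpleGraph.adjMatrix_apply]
      by_cases h : Γ.Adj i j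
      · rw [if_pos h, if_pos h, hPsi i j h]; ring
      · simp [h]
  · intro hcp v p
    have hconj : ∀ i j, Γ.Adj i j → (starRingEnd ℂ) (Ψ i j) = Ψ j i := by
      intro i j h
      rw [hinv _ _ h, Complex.inv_def, Complex.normSq_eq_norm_sq, hunit _ _ h]
      norm_num
    have hAher : A.IsHermitian := by
      rw [Matrix.IsHermitian]
      ext i j
      rw [hA]
      simp only [Matrix.conjTranspose_apply, Matrix.of_apply]
      by_cases h : Γ.Adj j i
      · rw [if_pos h, if_pos h.symm, Complex.star_def, hconj j i h]
      · rw [if_neg h, if_neg fun h' => h h'.symm, star_zero]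
    have hBher : (Γ.adjMatrix ℂ).IsHermitian := by
      rw [Matrix.IsHermitian]
      ext i j
      simp only [Matrix.conjTranspose_apply, SimpleGraph.adjMatrix_apply]
      by_cases h : Γ.Adj j i
      · rw [if_pos h, if_pos h.symm, star_one]
      · rw [if_neg h, if_neg fun h' => h h'.symm, star_zero]
    have htr : ∀ k, (A ^ k).trace = ((Γ.adjMatrix ℂ) ^ k).trace := fun k => by
      rw [trace_pow_eq_sum_roots hAher, trace_pow_eq_sum_roots hBher, hcp]
    set k := p.length with hk
    have h1 : (A ^ k).trace = ∑ i, ∑ q ∈ Γ.finsetWalkLength k i i, walkGain Ψ q := by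
      rw [Matrix.trace]
      exact Finset.sum_congr rfl fun i _ => by
        rw [Matrix.diag_apply, hA, pow_apply_eq_sum_walkGain k i i]
    have h2 : ((Γ.adjMatrix ℂ) ^ k).trace
        = ∑ i, (((Γ.finsetWalkLength k i i).card : ℕ) : ℂ) := by
      rw [Matrix.trace]
      refine Finset.sum_congr rfl fun i _ => ?_
      rw [Matrix.diag_apply, SimpleGraph.adjMatrix_pow_apply_eq_card_walk,
        SimpleGraph.card_set_walk_length_eq]
    have hre : ∑ i, ∑ q ∈ Γ.finsetWalkLength k i i, (walkGain Ψ q).re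
        = ∑ i, ∑ q ∈ Γ.finsetWalkLength k i i, (1 : ℝ) := by
      have hcc := congrArg Complex.re ((h1.symm.trans (htr k)).trans h2)
      rw [Complex.re_sum, Complex.re_sum] at hcc
      rw [Finset.sum_congr rfl fun i (_ : i ∈ Finset.univ) => Complex.re_sum _ _] at hcc
      rw [hcc]
      refine Finset.sum_congr rfl fun i _ => ?_
      simp [Finset.sum_const]
    have hle : ∀ i ∈ (Finset.univ : Finset (Fin n)),
        (∑ q ∈ Γ.finsetWalkLength k i i, (walkGain Ψ q).re)
          ≤ ∑ q ∈ Γ.finsetWalkLength k i i, (1 : ℝ) := by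
      intro i _
      refine Finset.sum_le_sum fun q _ => ?_
      calc (walkGain Ψ q).re ≤ ‖walkGain Ψ q‖ := Complex.re_le_norm _
        _ = 1 := abs_walkGain hunit q
    have hv := (Finset.sum_eq_sum_iff_of_le hle).1 hre v (Finset.mem_univ v)
    have hle2 : ∀ q ∈ Γ.finsetWalkLength k v v, (walkGain Ψ q).re ≤ (1 : ℝ) := by
      intro q _
      calc (walkGain Ψ q).re ≤ ‖walkGain Ψ q‖ := Complex.re_le_norm _
        _ = 1 := abs_walkGain hunit q
    have hpmem : p ∈ Γ.finsetWalkLength k v v :=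
      SimpleGraph.mem_finsetWalkLength_iff.mpr rfl
    have hrep : (walkGain Ψ p).re = 1 :=
      (Finset.sum_eq_sum_iff_of_le hle2).1 hv p hpmem
    have habs := abs_walkGain hunit p
    have him : (walkGain Ψ p).im = 0 := by
      have hsq : ‖walkGain Ψ p‖ ^ 2 = 1 := by rw [habs]; norm_num
      rw [Complex.sq_norm, Complex.normSq_apply, hrep] at hsq
      nlinarith
    exact Complex.ext (by simpa using hrep) (by simpa using him)


end GainPaper
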